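/- Let V₁ and V₂ be finite-dimensional vector spaces over a field K, of dimensions d₁ and d₂. If S = {(v_i, v'_i) : 1 ≤ i ≤ d₁+d₂} is a basis of V₁ ⊕ V₂, then S can be partitioned into sets B₁ and B₂ of sizes d₁ and d₂ respectively, such that the projections of the elements of B₁ to V₁ form a basis of V₁ and the projections of the elements of B₂ to V₂ form a basis of V₂. -/

import Mathlib

/-- A basis of `V₁ × V₂` indexed by a finite type can be partitioned into
two sets `B₁, B₂` of sizes `dim V₁` and `dim V₂` such that the projections of the
elements of `Bᵢ` to `Vᵢ` form a basis of `Vᵢ`. -/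
theorem stmt_0 {K V₁ V₂ : Type*} [Field K]
    [AddCommGroup V₁] [Module K V₁] [FiniteDimensional K V₁]
    [AddCommGroup V₂] [Module K V₂] [FiniteDimensional K V₂]
    {ι : Type*} [Fintype ι] [DecidableEq ι] (b : Module.Basis ι K (V₁ × V₂)) :
    ∃ B₁ B₂ : Finset ι,
      Disjoint B₁ B₂ ∧ B₁ ∪ B₂ = Finset.univ ∧
      B₁.card = Module.finrank K V₁ ∧ B₂.card = Module.finrank K V₂ ∧
      (LinearIndependent K (fun i : B₁ => (b i).1) ∧
        Submodule.span K (Set.range (fun i : B₁ => (b i).1)) = ⊤) ∧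
      (LinearIndependent K (fun i : B₂ => (b i).2) ∧
        Submodule.span K (Set.range (fun i : B₂ => (b i).2)) = ⊤) := by
  classical
  set a : ι → V₁ × V₂ := fun i => ((b i).1, 0) with ha
  set c : ι → V₁ × V₂ := fun i => (0, (b i).2) with hc
  have hbac : (b : ι → V₁ × V₂) = a + c := by
    funext i
    simp [ha, hc, Prod.ext_iff]
  have hdet : (∑ s : Finset ι, b.det (s.piecewise a c)) = 1 :=
    (b.det.toMultilinearMap.map_add_univ a c).symm.trans (by rw [← hbac]; exact b.det_self)
  have hex : ∃ s : Finset ι, b.det (s.piecewise a c) ≠ 0 := by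
    by_contra h
    push_neg at h
    rw [Finset.sum_congr rfl (fun s _ => h s)] at hdet
    simp at hdet
  obtain ⟨s, hs⟩ := hex
  set v : ι → V₁ × V₂ := s.piecewise a c with hv
  have hli : LinearIndependent K v := by
    by_contra h
    exact hs (b.det.map_linearDependent v h)
  -- component families
  have h1comp : (fun i : s => v i) = (LinearMap.inl K V₁ V₂) ∘ (fun i : s => (b i).1) := by
    funext i
    simp [hv, Finset.piecewise_eq_of_mem _ _ _ i.2, ha]
  have h2comp : (fun i : (sᶜ : Finset ι) => v i) =
      (LinearMap.inr K V₁ V₂) ∘ (fun i : (sᶜ : Finset ι) => (b i).2) := by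
    funext i
    have : (i : ι) ∉ s := Finset.mem_compl.mp i.2
    simp [hv, Finset.piecewise_eq_of_notMem _ _ _ this, hc]
  have li1 : LinearIndependent K (fun i : s => (b i).1) := by
    have := hli.comp (Subtype.val : s → ι) Subtype.val_injective
    rw [show (v ∘ (Subtype.val : s → ι)) = (fun i : s => v i) from rfl, h1comp] at this
    exact LinearIndependent.of_comp _ this
  have li2 : LinearIndependent K (fun i : (sᶜ : Finset ι) => (b i).2) := by
    have := hli.comp (Subtype.val : (sᶜ : Finset ι) → ι) Subtype.val_injective
    rw [show (v ∘ (Subtype.val : (sᶜ : Finset ι) → ι)) = (fun i : (sᶜ : Finset ι) => v i) from rfl,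
      h2comp] at this
    exact LinearIndependent.of_comp _ this
  have hcard1 : s.card ≤ Module.finrank K V₁ := by
    have := li1.fintype_card_le_finrank
    rwa [Fintype.card_coe] at this
  have hcard2 : (sᶜ).card ≤ Module.finrank K V₂ := by
    have := li2.fintype_card_le_finrank
    rwa [Fintype.card_coe] at this
  have htot : s.card + (sᶜ).card = Module.finrank K V₁ + Module.finrank K V₂ := by
    have h1 : Fintype.card ι = Module.finrank K (V₁ × V₂) := (Module.finrank_eq_card_basis b).symm
    have h2 : Module.finrank K (V₁ × V₂) = Module.finrank K V₁ + Module.finrank K V₂ :=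
      Module.finrank_prod
    have h3 : s.card + (sᶜ).card = Fintype.card ι := by
      rw [Finset.card_compl]
      have := Finset.card_le_univ s
      omega
    omega
  have hc1 : s.card = Module.finrank K V₁ := by omega
  have hc2 : (sᶜ).card = Module.finrank K V₂ := by omega
  refine ⟨s, sᶜ, disjoint_compl_right, Finset.union_compl s, hc1, hc2, ⟨li1, ?_⟩, ⟨li2, ?_⟩⟩
  · exact li1.span_eq_top_of_card_eq_finrank' (by rw [Fintype.card_coe]; exact hc1)
  · exact li2.span_eq_top_of_card_eq_finrank' (by rw [Fintype.card_coe]; exact hc2)
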